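/- Let f : [-1,1] → ℝ be (d+1)-times continuously differentiable with max_{x ∈ [-1,1]} |f(x)| = 1. If f vanishes at at least d+1 distinct points of [-1,1], then max_{x ∈ [-1,1]} |f^{(d+1)}(x)| ≥ (d+1)!/2^{d+1}. -/

import Mathlib

open Set Polynomial

private lemma contDiff_polyeval (n : ℕ∞) (P : ℝ[X]) :
    ContDiff ℝ n (fun x => P.eval x) := by
  induction P using Polynomial.induction_on' with
  | add p q hp hq => simpa [Polynomial.eval_add] using hp.add hq
  | monomial k a =>
      simpa [Polynomial.eval_monomial] using (contDiff_const.mul (contDiff_id.pow k))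

private lemma itDW_polyeval (n : ℕ) (P : ℝ[X]) {s : Set ℝ} (hs : UniqueDiffOn ℝ s)
    {x : ℝ} (hx : x ∈ s) :
    iteratedDerivWithin n (fun y => P.eval y) s x = (derivative^[n] P).eval x := by
  induction n generalizing P x with
  | zero => simp
  | succ n ih =>
      rw [iteratedDerivWithin_succ']
      have heq : Set.EqOn (derivWithin (fun y => P.eval y) s)
          (fun y => P.derivative.eval y) s := by
        intro y hy
        rw [((P.differentiable.differentiableAt).derivWithin (hs y hy)), Polynomial.deriv]
      calc iteratedDerivWithin n (derivWithin (fun y => P.eval y) s) s x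
          = iteratedDerivWithin n (fun y => P.derivative.eval y) s x :=
            iteratedDerivWithin_congr heq hx
        _ = (derivative^[n] P.derivative).eval x := ih P.derivative hx
        _ = (derivative^[n + 1] P).eval x := by rw [Function.iterate_succ_apply]

/-- Generalized Rolle: if `g` is `C^n` on `[-1,1]` and vanishes at `n+1` points
given by a strictly monotone `x : Fin (n+1) → ℝ`, then the `n`-th derivative
within `[-1,1]` vanishes somewhere. -/
private lemma rolle_iter : ∀ (n : ℕ) (g : ℝ → ℝ),
    ContDiffOn ℝ n g (Set.Icc (-1 : ℝ) 1) →
    ∀ x : Fin (n + 1) → ℝ, StrictMono x → (∀ i, x i ∈ Set.Icc (-1 : ℝ) 1) →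
    (∀ i, g (x i) = 0) →
    ∃ ξ ∈ Set.Icc (-1 : ℝ) 1, iteratedDerivWithin n g (Set.Icc (-1 : ℝ) 1) ξ = 0 := by
  intro n
  induction n with
  | zero =>
      intro g _ x _ hxI hx0
      exact ⟨x 0, hxI 0, by simpa using hx0 0⟩
  | succ n IH =>
      intro g hg x hmono hxI hx0
      have hI : UniqueDiffOn ℝ (Set.Icc (-1 : ℝ) 1) := uniqueDiffOn_Icc (by norm_num)
      -- For each i, find a zero of deriv g in the open interval
      have key : ∀ i : Fin (n + 1), ∃ c ∈ Set.Ioo (x i.castSucc) (x i.succ),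
          deriv g c = 0 := by
        intro i
        have hab : x i.castSucc < x i.succ := hmono (Fin.castSucc_lt_succ (i := i))
        have hsub : Set.Icc (x i.castSucc) (x i.succ) ⊆ Set.Icc (-1 : ℝ) 1 :=
          Set.Icc_subset_Icc (hxI i.castSucc).1 (hxI i.succ).2
        have hcont : ContinuousOn g (Set.Icc (x i.castSucc) (x i.succ)) :=
          hg.continuousOn.mono hsub
        have hdiff : ∀ y ∈ Set.Ioo (x i.castSucc) (x i.succ), DifferentiableAt ℝ g y := by
          intro y hy
          have hy' : y ∈ Set.Ioo (-1 : ℝ) 1 :=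
            ⟨lt_of_le_of_lt (hxI i.castSucc).1 hy.1, lt_of_lt_of_le hy.2 (hxI i.succ).2⟩
          have hnhd : Set.Icc (-1 : ℝ) 1 ∈ nhds y :=
            Filter.mem_of_superset (isOpen_Ioo.mem_nhds hy') Set.Ioo_subset_Icc_self
          have h1n : (1 : WithTop ℕ∞) ≤ ((n + 1 : ℕ) : WithTop ℕ∞) := by
            exact_mod_cast Nat.succ_le_succ (Nat.zero_le n)
          have hdo : DifferentiableOn ℝ g (Set.Icc (-1 : ℝ) 1) := hg.differentiableOn (by simp)
          exact (hdo y (Set.Ioo_subset_Icc_self hy')).differentiableAt hnhd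
        obtain ⟨c, hc, hc0⟩ := exists_deriv_eq_zero hab hcont
          ((hx0 i.castSucc).trans (hx0 i.succ).symm)
        exact ⟨c, hc, hc0⟩
      choose c hcmem hczero using key
      have hcI : ∀ i, c i ∈ Set.Icc (-1 : ℝ) 1 := fun i =>
        ⟨le_of_lt (lt_of_le_of_lt (hxI i.castSucc).1 (hcmem i).1),
         le_of_lt (lt_of_lt_of_le (hcmem i).2 (hxI i.succ).2)⟩
      have hcmono : StrictMono c := by
        intro i j hij
        have h1 : c i < x i.succ := (hcmem i).2
        have h2 : x j.castSucc < c j := (hcmem j).1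
        have h3 : x i.succ ≤ x j.castSucc := by
          apply hmono.monotone
          simp only [Fin.le_def, Fin.val_succ, Fin.coe_castSucc]
          exact hij
        exact lt_of_lt_of_le h1 (le_of_lt (lt_of_le_of_lt h3 h2))
      have hczero' : ∀ i, derivWithin g (Set.Icc (-1 : ℝ) 1) (c i) = 0 := by
        intro i
        have hnhd : Set.Icc (-1 : ℝ) 1 ∈ nhds (c i) := by
          refine Filter.mem_of_superset (isOpen_Ioo.mem_nhds
            (⟨lt_of_le_of_lt (hxI i.castSucc).1 (hcmem i).1,
              lt_of_lt_of_le (hcmem i).2 (hxI i.succ).2⟩ : c i ∈ Set.Ioo (-1 : ℝ) 1))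
            Set.Ioo_subset_Icc_self
        rw [derivWithin_of_mem_nhds hnhd]
        exact hczero i
      have hg' : ContDiffOn ℝ n (derivWithin g (Set.Icc (-1 : ℝ) 1)) (Set.Icc (-1 : ℝ) 1) := by
        apply hg.derivWithin hI
        exact_mod_cast le_rfl
      obtain ⟨ξ, hξI, hξ⟩ := IH (derivWithin g (Set.Icc (-1 : ℝ) 1)) hg' c hcmono hcI hczero'
      refine ⟨ξ, hξI, ?_⟩
      rw [iteratedDerivWithin_succ']
      exact hξ

/-- If `f : [-1,1] → ℝ` is `(d+1)`-times continuously differentiable, with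
`max_{[-1,1]} |f| = 1`, and `f` vanishes at at least `d+1` distinct points of `[-1,1]`,
then `max_{[-1,1]} |f^{(d+1)}| ≥ (d+1)!/2^(d+1)`. -/
theorem higher_deriv_lower_bound_of_zeros
    (d : ℕ) (f : ℝ → ℝ)
    (hf : ContDiffOn ℝ (d + 1) f (Set.Icc (-1 : ℝ) 1))
    (hbound : ∀ x ∈ Set.Icc (-1 : ℝ) 1, |f x| ≤ 1)
    (hattain : ∃ x ∈ Set.Icc (-1 : ℝ) 1, |f x| = 1)
    (Z : Finset ℝ) (hZ : (Z : Set ℝ) ⊆ Set.Icc (-1 : ℝ) 1)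
    (hZcard : d + 1 ≤ Z.card) (hZzero : ∀ x ∈ Z, f x = 0) :
    ∃ x ∈ Set.Icc (-1 : ℝ) 1,
      (Nat.factorial (d + 1) : ℝ) / 2 ^ (d + 1) ≤
        |iteratedDerivWithin (d + 1) f (Set.Icc (-1 : ℝ) 1) x| := by
  classical
  obtain ⟨x₀, hx₀I, hx₀⟩ := hattain
  have hI : UniqueDiffOn ℝ (Set.Icc (-1 : ℝ) 1) := uniqueDiffOn_Icc (by norm_num)
  obtain ⟨S, hSZ, hScard⟩ := Finset.exists_subset_card_eq hZcard
  have hSI : (S : Set ℝ) ⊆ Set.Icc (-1 : ℝ) 1 := fun y hy => hZ (hSZ hy)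
  have hfx₀ : f x₀ ≠ 0 := by
    intro h; rw [h, abs_zero] at hx₀; norm_num at hx₀
  have hx₀S : x₀ ∉ S := fun h => hfx₀ (hZzero x₀ (hSZ h))
  -- polynomial
  set P : ℝ[X] := ∏ z ∈ S, (X - C z) with hPdef
  have hPdeg : P.natDegree = d + 1 := by
    rw [hPdef, Polynomial.natDegree_prod _ _ (fun z _ => X_sub_C_ne_zero z)]
    simp [natDegree_X_sub_C, hScard]
  have hPmonic : P.Monic := monic_prod_of_monic _ _ (fun z _ => monic_X_sub_C z)
  -- (d+1)-st derivative of P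
  have hDP : derivative^[d + 1] P = C ((d + 1).factorial : ℝ) := by
    have hdeg0 : (derivative^[d + 1] P).natDegree = 0 := by
      have := natDegree_iterate_derivative P (d + 1)
      omega
    have hcoeff : (derivative^[d + 1] P).coeff 0 = ((d + 1).factorial : ℝ) := by
      rw [coeff_iterate_derivative]
      simp only [zero_add, Nat.descFactorial_self]
      have : P.coeff (d + 1) = 1 := by
        have := hPmonic.leadingCoeff
        rwa [Polynomial.leadingCoeff, hPdeg] at this
      rw [this]
      simp
    rw [Polynomial.eq_C_of_natDegree_le_zero (le_of_eq hdeg0), hcoeff]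
  have hpeval : ∀ y, P.eval y = ∏ z ∈ S, (y - z) := by
    intro y; rw [hPdef, Polynomial.eval_prod]; simp
  have hp0 : P.eval x₀ ≠ 0 := by
    rw [hpeval]
    exact Finset.prod_ne_zero_iff.2 fun z hz => sub_ne_zero.2 (fun h => hx₀S (h ▸ hz))
  have hpabs : |P.eval x₀| ≤ 2 ^ (d + 1) := by
    rw [hpeval, Finset.abs_prod]
    calc ∏ z ∈ S, |x₀ - z| ≤ ∏ z ∈ S, 2 := by
          apply Finset.prod_le_prod (fun z _ => abs_nonneg _)
          intro z hz
          have h1 := hx₀I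
          have h2 := hSI hz
          rw [Set.mem_Icc] at h1 h2
          rw [abs_sub_le_iff]; constructor <;> linarith
      _ = 2 ^ (d + 1) := by rw [Finset.prod_const, hScard]
  set lam : ℝ := f x₀ / P.eval x₀ with hlam
  set g : ℝ → ℝ := fun y => f y - lam * P.eval y with hgdef
  have hf' : ContDiffOn ℝ (((d + 1 : ℕ)) : WithTop ℕ∞) f (Set.Icc (-1 : ℝ) 1) := by
    exact_mod_cast hf
  have hgC : ContDiffOn ℝ (((d + 1 : ℕ)) : WithTop ℕ∞) g (Set.Icc (-1 : ℝ) 1) :=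
    hf'.sub (((contDiff_polyeval _ P).const_smul lam).contDiffOn.congr
      (fun y _ => by simp [smul_eq_mul]))
  -- zeros of g : the set insert x₀ S has d+2 elements
  have hTcard : (insert x₀ S).card = d + 2 := by
    rw [Finset.card_insert_of_notMem hx₀S, hScard]
  set T := insert x₀ S with hTdef
  have hTI : (T : Set ℝ) ⊆ Set.Icc (-1 : ℝ) 1 := by
    rw [hTdef]; intro y hy
    simp only [Finset.coe_insert, Set.mem_insert_iff] at hy
    rcases hy with rfl | hy
    · exact hx₀I
    · exact hSI hy
  have hgT : ∀ y ∈ T, g y = 0 := by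
    intro y hy
    rw [hTdef, Finset.mem_insert] at hy
    rcases hy with rfl | hy
    · rw [hgdef]; simp only; rw [hlam]; field_simp; simp
    · have hfy : f y = 0 := hZzero y (hSZ hy)
      have hpy : P.eval y = 0 := by
        rw [hpeval]
        exact Finset.prod_eq_zero hy (by simp)
      rw [hgdef]; simp [hfy, hpy]
  -- the strictly monotone enumeration
  have hTcard' : T.card = d + 1 + 1 := by rw [hTcard]
  set xe : Fin (d + 1 + 1) → ℝ := fun i => T.orderEmbOfFin hTcard' i with hxe
  have hxemono : StrictMono xe := (T.orderEmbOfFin hTcard').strictMono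
  have hxeI : ∀ i, xe i ∈ Set.Icc (-1 : ℝ) 1 := fun i =>
    hTI (T.orderEmbOfFin_mem hTcard' i)
  have hxe0 : ∀ i, g (xe i) = 0 := fun i => hgT _ (T.orderEmbOfFin_mem hTcard' i)
  obtain ⟨ξ, hξI, hξ⟩ := rolle_iter (d + 1) g hgC xe hxemono hxeI hxe0
  -- compute the iterated derivative of g
  have hPC : ContDiffOn ℝ (((d + 1 : ℕ)) : WithTop ℕ∞) (fun y => P.eval y) (Set.Icc (-1 : ℝ) 1) :=
    (contDiff_polyeval _ P).contDiffOn
  have hsplit : iteratedDerivWithin (d + 1) g (Set.Icc (-1 : ℝ) 1) ξ =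
      iteratedDerivWithin (d + 1) f (Set.Icc (-1 : ℝ) 1) ξ -
        lam * iteratedDerivWithin (d + 1) (fun y => P.eval y) (Set.Icc (-1 : ℝ) 1) ξ := by
    have h1 : g = f - (fun y => lam * P.eval y) := by
      funext y; simp [hgdef]
    rw [h1, iteratedDerivWithin_sub hξI hI (hf' ξ hξI)
      ((show ContDiffOn ℝ (((d + 1 : ℕ)) : WithTop ℕ∞) (fun y => lam * P.eval y) (Set.Icc (-1 : ℝ) 1) from hPC.const_smul lam |>.congr (fun y _ => by simp [smul_eq_mul])) ξ hξI),
      iteratedDerivWithin_const_mul hξI hI lam (hPC ξ hξI)]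
  have hPval : iteratedDerivWithin (d + 1) (fun y => P.eval y) (Set.Icc (-1 : ℝ) 1) ξ =
      ((d + 1).factorial : ℝ) := by
    rw [itDW_polyeval _ _ hI hξI, hDP, Polynomial.eval_C]
  have hfval : iteratedDerivWithin (d + 1) f (Set.Icc (-1 : ℝ) 1) ξ =
      lam * ((d + 1).factorial : ℝ) := by
    have := hξ
    rw [hsplit, hPval] at this
    linarith
  refine ⟨ξ, hξI, ?_⟩
  rw [hfval, abs_mul, hlam, abs_div, hx₀, abs_of_nonneg (by positivity :
    (0:ℝ) ≤ ((d + 1).factorial : ℝ))]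
  rw [div_mul_eq_mul_div, one_mul]
  apply div_le_div_of_nonneg_left (by positivity) (abs_pos.2 hp0)
  exact hpabs
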